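/- Let R be a ring, S a right coherent ring, E an R-S-bimodule that is fp-injective as a right S-module, and J an injective left R-module. Then the left S-module Hom_R(E,J) is flat. -/

import Mathlib

open CategoryTheory TensorProduct

universe u

set_option maxHeartbeats 1000000
noncomputable section

namespace NCT

variable (R : Type u) [Ring R]

/-- The subgroup of relations defining the balanced tensor product `M ⊗_R N`
of a right `R`-module `M` and a left `R`-module `N`. -/
def rel (M N : Type u) [AddCommGroup M] [Module Rᵐᵒᵖ M] [AddCommGroup N] [Module R N] :
    AddSubgroup (M ⊗[ℤ] N) :=
  AddSubgroup.closure {x | ∃ (r : R) (m : M) (n : N),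
    x = (MulOpposite.op r • m) ⊗ₜ[ℤ] n - m ⊗ₜ[ℤ] (r • n)}

/-- The balanced tensor product `M ⊗_R N` over a (possibly noncommutative) ring `R`. -/
def Tens (M N : Type u) [AddCommGroup M] [Module Rᵐᵒᵖ M] [AddCommGroup N] [Module R N] :
    Type u :=
  (M ⊗[ℤ] N) ⧸ rel R M N

instance (M N : Type u) [AddCommGroup M] [Module Rᵐᵒᵖ M] [AddCommGroup N] [Module R N] :
    AddCommGroup (Tens R M N) :=
  inferInstanceAs (AddCommGroup ((M ⊗[ℤ] N) ⧸ rel R M N))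

variable {R}

variable {M M' M'' N N' N'' : Type u}
  [AddCommGroup M] [Module Rᵐᵒᵖ M] [AddCommGroup M'] [Module Rᵐᵒᵖ M']
  [AddCommGroup M''] [Module Rᵐᵒᵖ M'']
  [AddCommGroup N] [Module R N] [AddCommGroup N'] [Module R N']
  [AddCommGroup N''] [Module R N'']

/-- The canonical projection. -/
def mk : M ⊗[ℤ] N →+ Tens R M N := QuotientAddGroup.mk' (rel R M N)

lemma mk_surjective : Function.Surjective (mk (R := R) (M := M) (N := N)) :=
  QuotientAddGroup.mk'_surjective _

private def intMap (f : M →ₗ[Rᵐᵒᵖ] M') (g : N →ₗ[R] N') : M ⊗[ℤ] N →ₗ[ℤ] M' ⊗[ℤ] N' :=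
  TensorProduct.map f.toAddMonoidHom.toIntLinearMap g.toAddMonoidHom.toIntLinearMap

private lemma intMap_id :
    intMap (LinearMap.id : M →ₗ[Rᵐᵒᵖ] M) (LinearMap.id : N →ₗ[R] N) = LinearMap.id :=
  TensorProduct.ext' fun _ _ => rfl

private lemma intMap_comp (f' : M' →ₗ[Rᵐᵒᵖ] M'') (f : M →ₗ[Rᵐᵒᵖ] M')
    (g' : N' →ₗ[R] N'') (g : N →ₗ[R] N') :
    intMap (f'.comp f) (g'.comp g) = (intMap f' g').comp (intMap f g) :=
  TensorProduct.ext' fun _ _ => rfl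

private lemma rel_le (f : M →ₗ[Rᵐᵒᵖ] M') (g : N →ₗ[R] N') :
    rel R M N ≤ (rel R M' N').comap (intMap f g).toAddMonoidHom := by
  rw [rel, AddSubgroup.closure_le]
  rintro x ⟨r, m, n, rfl⟩
  simp only [SetLike.mem_coe, AddSubgroup.mem_comap, LinearMap.toAddMonoidHom_coe, map_sub]
  apply AddSubgroup.subset_closure
  refine ⟨r, f m, g n, ?_⟩
  show (f (MulOpposite.op r • m)) ⊗ₜ[ℤ] g n - f m ⊗ₜ[ℤ] g (r • n) = _
  rw [f.map_smul, g.map_smul]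

/-- Functoriality of the balanced tensor product. -/
def tmap (f : M →ₗ[Rᵐᵒᵖ] M') (g : N →ₗ[R] N') : Tens R M N →+ Tens R M' N' :=
  QuotientAddGroup.map _ _ (intMap f g).toAddMonoidHom (rel_le f g)

lemma tmap_mk (f : M →ₗ[Rᵐᵒᵖ] M') (g : N →ₗ[R] N') (x : M ⊗[ℤ] N) :
    tmap f g (mk x) = mk (intMap f g x) := rfl

lemma tmap_id_apply (x : Tens R M N) :
    tmap (LinearMap.id : M →ₗ[Rᵐᵒᵖ] M) (LinearMap.id : N →ₗ[R] N) x = x := by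
  obtain ⟨y, rfl⟩ := mk_surjective x
  rw [tmap_mk, intMap_id]
  rfl

lemma tmap_tmap (f' : M' →ₗ[Rᵐᵒᵖ] M'') (f : M →ₗ[Rᵐᵒᵖ] M')
    (g' : N' →ₗ[R] N'') (g : N →ₗ[R] N') (x : Tens R M N) :
    tmap f' g' (tmap f g x) = tmap (f'.comp f) (g'.comp g) x := by
  obtain ⟨y, rfl⟩ := mk_surjective x
  rw [tmap_mk, tmap_mk, tmap_mk, intMap_comp]
  rfl

lemma tmap_add_left (f₁ f₂ : M →ₗ[Rᵐᵒᵖ] M') (g : N →ₗ[R] N') :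
    tmap (f₁ + f₂) g = tmap f₁ g + tmap f₂ g := by
  ext x
  obtain ⟨y, rfl⟩ := mk_surjective x
  have h : intMap (f₁ + f₂) g = intMap f₁ g + intMap f₂ g := by
    apply TensorProduct.ext'
    intro m n
    show (f₁ m + f₂ m) ⊗ₜ[ℤ] g n = _
    rw [add_tmul]
    rfl
  simp only [AddMonoidHom.add_apply, tmap_mk, h, LinearMap.add_apply]
  rw [map_add]

lemma tmap_add_right (f : M →ₗ[Rᵐᵒᵖ] M') (g₁ g₂ : N →ₗ[R] N') :
    tmap f (g₁ + g₂) = tmap f g₁ + tmap f g₂ := by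
  ext x
  obtain ⟨y, rfl⟩ := mk_surjective x
  have h : intMap f (g₁ + g₂) = intMap f g₁ + intMap f g₂ := by
    apply TensorProduct.ext'
    intro m n
    show f m ⊗ₜ[ℤ] (g₁ n + g₂ n) = _
    rw [tmul_add]
    rfl
  simp only [AddMonoidHom.add_apply, tmap_mk, h, LinearMap.add_apply]
  rw [map_add]


lemma tmap_zero_left (g : N →ₗ[R] N') :
    tmap (0 : M →ₗ[Rᵐᵒᵖ] M') g = 0 := by
  ext x
  obtain ⟨y, rfl⟩ := mk_surjective x
  have h : intMap (0 : M →ₗ[Rᵐᵒᵖ] M') g = 0 := by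
    apply TensorProduct.ext'
    intro m n
    show (0 : M') ⊗ₜ[ℤ] g n = 0
    rw [zero_tmul]
  rw [tmap_mk, h]
  rfl

lemma tmap_zero_right (f : M →ₗ[Rᵐᵒᵖ] M') :
    tmap f (0 : N →ₗ[R] N') = 0 := by
  ext x
  obtain ⟨y, rfl⟩ := mk_surjective x
  have h : intMap f (0 : N →ₗ[R] N') = 0 := by
    apply TensorProduct.ext'
    intro m n
    show f m ⊗ₜ[ℤ] (0 : N') = 0
    rw [tmul_zero]
  rw [tmap_mk, h]
  rfl

variable (R)

/-- The balanced tensor product, as a bifunctor on module categories. -/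
def tensorBifunctor : ModuleCat.{u} Rᵐᵒᵖ ⥤ ModuleCat.{u} R ⥤ AddCommGrpCat.{u} where
  obj M :=
    { obj := fun N => AddCommGrpCat.of (Tens R M N)
      map := fun g => AddCommGrpCat.ofHom (tmap LinearMap.id g.hom)
      map_id := fun N => by
        ext x
        exact tmap_id_apply x
      map_comp := fun g g' => by
        ext x
        show tmap LinearMap.id (LinearMap.comp g'.hom g.hom) x
          = tmap LinearMap.id g'.hom (tmap LinearMap.id g.hom x)
        rw [tmap_tmap, LinearMap.id_comp] }
  map f :=
    { app := fun N => AddCommGrpCat.ofHom (tmap f.hom LinearMap.id)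
      naturality := fun N N' g => by
        ext x
        show tmap f.hom LinearMap.id (tmap LinearMap.id g.hom x)
          = tmap LinearMap.id g.hom (tmap f.hom LinearMap.id x)
        rw [tmap_tmap, tmap_tmap, LinearMap.id_comp, LinearMap.comp_id,
          LinearMap.id_comp, LinearMap.comp_id] }
  map_id := fun M => by
    ext N x
    exact tmap_id_apply x
  map_comp := fun f f' => by
    ext N x
    show tmap (LinearMap.comp f'.hom f.hom) LinearMap.id x
      = tmap f'.hom LinearMap.id (tmap f.hom LinearMap.id x)
    rw [tmap_tmap, LinearMap.id_comp]

instance (M : ModuleCat.{u} Rᵐᵒᵖ) : ((tensorBifunctor R).obj M).Additive where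
  map_add := by
    intro N N' g g'
    ext x
    show tmap LinearMap.id (g.hom + g'.hom) x = _
    rw [tmap_add_right]
    rfl

instance (N : ModuleCat.{u} R) : ((tensorBifunctor R).flip.obj N).Additive where
  map_add := by
    intro M M' f f'
    ext x
    show tmap (f.hom + f'.hom) LinearMap.id x = _
    rw [tmap_add_left]
    rfl


instance : (tensorBifunctor R).PreservesZeroMorphisms where
  map_zero := by
    intro M M'
    ext N x
    show tmap (0 : ↑M →ₗ[Rᵐᵒᵖ] ↑M') LinearMap.id x = 0
    rw [tmap_zero_left]
    rfl

/-- A right `R`-module `M` is flat if `M ⊗_R -` preserves injectivity. -/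
def FlatRight (M : Type u) [AddCommGroup M] [Module Rᵐᵒᵖ M] : Prop :=
  ∀ (N N' : Type u) [AddCommGroup N] [Module R N] [AddCommGroup N'] [Module R N']
    (g : N →ₗ[R] N'), Function.Injective g →
      Function.Injective (tmap (LinearMap.id : M →ₗ[Rᵐᵒᵖ] M) g)

/-- A left `R`-module `N` is flat if `- ⊗_R N` preserves injectivity. -/
def FlatLeft (N : Type u) [AddCommGroup N] [Module R N] : Prop :=
  ∀ (M M' : Type u) [AddCommGroup M] [Module Rᵐᵒᵖ M] [AddCommGroup M'] [Module Rᵐᵒᵖ M']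
    (f : M →ₗ[Rᵐᵒᵖ] M'), Function.Injective f →
      Function.Injective (tmap f (LinearMap.id : N →ₗ[R] N))

end NCT

open CategoryTheory Opposite

section

variable (R : Type u) [Ring R] (S : Type u) [Ring S]
variable (E : Type u) [AddCommGroup E] [Module R E] [Module Sᵐᵒᵖ E] [SMulCommClass R Sᵐᵒᵖ E]

/-- Right multiplication by `s ∈ S` on an `R`-`S`-bimodule `E`, as an `R`-linear map. -/
def rightMulLin (s : Sᵐᵒᵖ) : E →ₗ[R] E where
  toFun e := s • e
  map_add' := smul_add s
  map_smul' r e := (smul_comm r s e).symm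

variable (J : Type u) [AddCommGroup J] [Module R J]

/-- The left `S`-module structure on `Hom_R(E, J)` induced by the right `S`-module
structure on the `R`-`S`-bimodule `E`: `(s • f) e = f (e • s)`. -/
instance homLeftModule : Module S (E →ₗ[R] J) where
  smul s f := f.comp (rightMulLin R S E (MulOpposite.op s))
  one_smul f := by
    ext e
    show f ((MulOpposite.op (1 : S)) • e) = f e
    rw [MulOpposite.op_one, one_smul]
  mul_smul s t f := by
    ext e
    show f ((MulOpposite.op (s * t)) • e) = f (MulOpposite.op t • MulOpposite.op s • e)
    rw [MulOpposite.op_mul, mul_smul]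
  smul_zero s := by ext e; rfl
  smul_add s f g := by ext e; rfl
  add_smul s t f := by
    ext e
    show f ((MulOpposite.op (s + t)) • e) = f (MulOpposite.op s • e) + f (MulOpposite.op t • e)
    rw [← map_add, MulOpposite.op_add, add_smul]
  zero_smul f := by
    ext e
    show f ((MulOpposite.op (0 : S)) • e) = 0
    rw [MulOpposite.op_zero, zero_smul, map_zero]

end

/-- A module is finitely presentable if it is the cokernel of a morphism of finitely
generated free modules. -/
def IsFinitelyPresentableMod (A : Type u) [Ring A] (M : Type u) [AddCommGroup M]
    [Module A M] : Prop :=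
  ∃ (k l : ℕ) (f : (Fin k →₀ A) →ₗ[A] (Fin l →₀ A)),
    Nonempty (M ≃ₗ[A] ((Fin l →₀ A) ⧸ LinearMap.range f))

namespace NCT


section Util

variable {R : Type u} [Ring R]
variable {M M' N : Type u} [AddCommGroup M] [Module Rᵐᵒᵖ M] [AddCommGroup M'] [Module Rᵐᵒᵖ M']
  [AddCommGroup N] [Module R N]

lemma mk_smul_tmul (r : R) (m : M) (n : N) :
    (mk ((MulOpposite.op r • m) ⊗ₜ[ℤ] n) : Tens R M N) = mk (m ⊗ₜ[ℤ] (r • n)) := by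
  have h : ((MulOpposite.op r • m) ⊗ₜ[ℤ] n) - (m ⊗ₜ[ℤ] (r • n)) ∈ rel R M N :=
    AddSubgroup.subset_closure ⟨r, m, n, rfl⟩
  rw [← sub_eq_zero, ← map_sub]
  exact (QuotientAddGroup.eq_zero_iff _).mpr h

lemma tmap_mk_tmul (f : M →ₗ[Rᵐᵒᵖ] M') (m : M) (n : N) :
    tmap f (LinearMap.id : N →ₗ[R] N) (mk (m ⊗ₜ[ℤ] n)) = mk (f m ⊗ₜ[ℤ] n) := by
  rw [tmap_mk]
  rfl

lemma tmap_surj {f : M →ₗ[Rᵐᵒᵖ] M'} (hf : Function.Surjective f) :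
    Function.Surjective (tmap f (LinearMap.id : N →ₗ[R] N)) := by
  intro x
  obtain ⟨t, rfl⟩ := mk_surjective x
  induction t using TensorProduct.induction_on with
  | zero => exact ⟨0, by rw [map_zero, map_zero]⟩
  | tmul m n =>
    obtain ⟨m', rfl⟩ := hf m
    exact ⟨mk (m' ⊗ₜ n), tmap_mk_tmul _ _ _⟩
  | add a b ha hb =>
    obtain ⟨xa, hxa⟩ := ha
    obtain ⟨xb, hxb⟩ := hb
    exact ⟨xa + xb, by rw [map_add, hxa, hxb, map_add]⟩

variable {A : Type*} [AddCommGroup A]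

/-- Lift a ℤ-bilinear balanced map to the balanced tensor product. -/
def liftTens (B : M →ₗ[ℤ] N →ₗ[ℤ] A)
    (hB : ∀ (r : R) (m : M) (n : N), B (MulOpposite.op r • m) n = B m (r • n)) :
    Tens R M N →+ A :=
  QuotientAddGroup.lift _ (TensorProduct.lift B).toAddMonoidHom (by
    intro x hx
    have hle : rel R M N ≤ (TensorProduct.lift B).toAddMonoidHom.ker := by
      rw [rel, AddSubgroup.closure_le]
      rintro y ⟨r, m, n, rfl⟩
      simp only [SetLike.mem_coe, AddMonoidHom.mem_ker, LinearMap.toAddMonoidHom_coe, map_sub,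
        TensorProduct.lift.tmul, hB, sub_self]
    exact hle hx)

@[simp] lemma liftTens_mk_tmul (B : M →ₗ[ℤ] N →ₗ[ℤ] A)
    (hB : ∀ (r : R) (m : M) (n : N), B (MulOpposite.op r • m) n = B m (r • n)) (m : M) (n : N) :
    liftTens B hB (mk (m ⊗ₜ[ℤ] n)) = B m n := by
  have h : liftTens B hB (mk (m ⊗ₜ[ℤ] n)) = (TensorProduct.lift B).toAddMonoidHom (m ⊗ₜ[ℤ] n) :=
    QuotientAddGroup.lift_mk' _ _ _
  simpa using h

end Util

end NCT
namespace NCT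

section Char

variable {S : Type u} [Ring S]
variable {N : Type u} [AddCommGroup N] [Module S N]

instance charSMul : SMul Sᵐᵒᵖ (CharacterModule N) :=
  ⟨fun c χ => χ.comp (AddMonoidHom.mk' (fun n => c.unop • n) (fun a b => smul_add _ a b))⟩

@[simp] lemma opSmul_char_apply (c : Sᵐᵒᵖ) (χ : CharacterModule N) (n : N) :
    (c • χ) n = χ (c.unop • n) := rfl

instance charModule : Module Sᵐᵒᵖ (CharacterModule N) where
  one_smul χ := by ext n; simp
  mul_smul c c' χ := by ext n; simp [MulOpposite.unop_mul, mul_smul]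
  smul_zero c := by ext n; rfl
  smul_add c χ χ' := by ext n; rfl
  add_smul c c' χ := by
    ext n
    show χ (MulOpposite.unop (c + c') • n) = χ (MulOpposite.unop c • n) + χ (MulOpposite.unop c' • n)
    rw [MulOpposite.unop_add, add_smul, map_add]
  zero_smul χ := by
    ext n
    show χ (MulOpposite.unop (0 : Sᵐᵒᵖ) • n) = 0
    rw [MulOpposite.unop_zero, zero_smul, map_zero]

variable {M : Type u} [AddCommGroup M] [Module Sᵐᵒᵖ M]

/-- A linear map into the character module induces a character of the balanced tensor
product. -/
def theta (g : M →ₗ[Sᵐᵒᵖ] CharacterModule N) : Tens S M N →+ AddCircle (1 : ℚ) :=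
  liftTens (LinearMap.mk₂ ℤ (fun m n => g m n)
    (fun m m' n => by beta_reduce; rw [map_add]; rfl)
    (fun z m n => by beta_reduce; rw [map_zsmul]; rfl)
    (fun m n n' => by simp)
    (fun z m n => by beta_reduce; rw [map_zsmul]))
    (fun r m n => by
      simp only [LinearMap.mk₂_apply, map_smul, opSmul_char_apply, MulOpposite.unop_op])

@[simp] lemma theta_mk_tmul (g : M →ₗ[Sᵐᵒᵖ] CharacterModule N) (m : M) (n : N) :
    theta g (mk (m ⊗ₜ[ℤ] n)) = g m n := by
  rw [theta]
  exact liftTens_mk_tmul _ _ m n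

/-- A character of the balanced tensor product induces a linear map into the character
module. -/
def unTheta (χ : Tens S M N →+ AddCircle (1 : ℚ)) : M →ₗ[Sᵐᵒᵖ] CharacterModule N where
  toFun m := χ.comp ((mk : M ⊗[ℤ] N →+ Tens S M N).comp
    ((TensorProduct.mk ℤ M N m).toAddMonoidHom))
  map_add' m m' := by
    ext n
    show χ (mk ((m + m') ⊗ₜ[ℤ] n)) = χ (mk (m ⊗ₜ[ℤ] n)) + χ (mk (m' ⊗ₜ[ℤ] n))
    rw [TensorProduct.add_tmul, map_add, map_add]
  map_smul' c m := by
    ext n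
    show χ (mk ((c • m) ⊗ₜ[ℤ] n)) = χ (mk (m ⊗ₜ[ℤ] (c.unop • n)))
    rw [← mk_smul_tmul c.unop m n, MulOpposite.op_unop]

@[simp] lemma unTheta_apply (χ : Tens S M N →+ AddCircle (1 : ℚ)) (m : M) (n : N) :
    unTheta χ m n = χ (mk (m ⊗ₜ[ℤ] n)) := rfl

lemma theta_unTheta (χ : Tens S M N →+ AddCircle (1 : ℚ)) : theta (unTheta χ) = χ := by
  ext x
  obtain ⟨t, rfl⟩ := mk_surjective x
  induction t using TensorProduct.induction_on with
  | zero => simp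
  | tmul m n => simp
  | add a b ha hb => simp only [map_add, ha, hb]

/-- Naturality of `theta`. -/
lemma theta_comp {M' : Type u} [AddCommGroup M'] [Module Sᵐᵒᵖ M'] (f : M →ₗ[Sᵐᵒᵖ] M')
    (g : M' →ₗ[Sᵐᵒᵖ] CharacterModule N) (x : Tens S M N) :
    theta g (tmap f (LinearMap.id : N →ₗ[S] N) x) = theta (g.comp f) x := by
  obtain ⟨t, rfl⟩ := mk_surjective x
  induction t using TensorProduct.induction_on with
  | zero => simp
  | tmul m n => rw [tmap_mk_tmul, theta_mk_tmul, theta_mk_tmul]; rfl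
  | add a b ha hb => simp only [map_add, ha, hb]

/-- If the character module of `N` is an injective `Sᵐᵒᵖ`-module, then `N` is flat. -/
theorem flatLeft_of_injective_char
    (hinj : Module.Injective Sᵐᵒᵖ (CharacterModule N)) : FlatLeft S N := by
  intro M M' _ _ _ _ f hf
  rw [injective_iff_map_eq_zero]
  intro x hx
  by_contra hne
  obtain ⟨χ, hχ⟩ := CharacterModule.exists_character_apply_ne_zero_of_ne_zero hne
  obtain ⟨g', hg'⟩ := hinj.out f hf (unTheta χ)
  have hfeq : (g'.comp f) = unTheta χ := LinearMap.ext hg'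
  have := theta_comp f g' x
  have h7 : theta (unTheta χ) x = χ x := DFunLike.congr_fun (theta_unTheta χ) x
  rw [hfeq, hx, map_zero] at this
  exact hχ (h7.symm.trans this.symm)

end Char

end NCT
namespace NCT

section Baer

variable {S : Type u} [Ring S]
variable {N : Type u} [AddCommGroup N] [Module S N]

theorem baer_char
    (h : ∀ I : Ideal Sᵐᵒᵖ,
      Function.Injective (tmap (I.subtype) (LinearMap.id : N →ₗ[S] N))) :
    Module.Baer Sᵐᵒᵖ (CharacterModule N) := by
  intro I g
  obtain ⟨χ', hχ'⟩ := CharacterModule.dual_surjective_of_injective (R := ℤ)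
    ((tmap (I.subtype) (LinearMap.id : N →ₗ[S] N)).toIntLinearMap) (h I) (theta g)
  refine ⟨unTheta χ', ?_⟩
  intro x hx
  ext n
  have h2 := DFunLike.congr_fun hχ' (mk ((⟨x, hx⟩ : I) ⊗ₜ[ℤ] n))
  have h3 : (CharacterModule.dual (R := ℤ)
      ((tmap (I.subtype) (LinearMap.id : N →ₗ[S] N)).toIntLinearMap) χ')
        (mk ((⟨x, hx⟩ : I) ⊗ₜ[ℤ] n))
      = χ' (tmap (I.subtype) (LinearMap.id : N →ₗ[S] N) (mk ((⟨x, hx⟩ : I) ⊗ₜ[ℤ] n))) := rfl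
  rw [h3, tmap_mk_tmul] at h2
  exact h2.trans (theta_mk_tmul g _ n)

theorem tmap_ideal_injective_of_fg_case
    (hfg : ∀ I : Ideal Sᵐᵒᵖ, I.FG →
      Function.Injective (tmap (I.subtype) (LinearMap.id : N →ₗ[S] N)))
    (I : Ideal Sᵐᵒᵖ) :
    Function.Injective (tmap (I.subtype) (LinearMap.id : N →ₗ[S] N)) := by
  have exists_fg_factor : ∀ (x : Tens S ↥I N),
      ∃ (I₀ : Ideal Sᵐᵒᵖ) (hle : I₀ ≤ I) (x₀ : Tens S ↥I₀ N), I₀.FG ∧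
        tmap (Submodule.inclusion hle) (LinearMap.id : N →ₗ[S] N) x₀ = x := by
    intro x
    obtain ⟨t, rfl⟩ := mk_surjective x
    induction t using TensorProduct.induction_on with
    | zero =>
      exact ⟨⊥, bot_le, 0, Submodule.fg_bot, by rw [map_zero, map_zero]⟩
    | tmul a n =>
      refine ⟨Submodule.span Sᵐᵒᵖ {(a : Sᵐᵒᵖ)},
        Submodule.span_le.mpr (by simp [a.2]),
        mk ((⟨(a : Sᵐᵒᵖ), Submodule.mem_span_singleton_self _⟩ :
          Submodule.span Sᵐᵒᵖ {(a : Sᵐᵒᵖ)}) ⊗ₜ[ℤ] n),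
        ⟨{(a : Sᵐᵒᵖ)}, by simp⟩, ?_⟩
      rw [tmap_mk_tmul]
      congr
    | add t₁ t₂ h₁ h₂ =>
      obtain ⟨I₁, hle₁, x₁, hfg₁, hx₁⟩ := h₁
      obtain ⟨I₂, hle₂, x₂, hfg₂, hx₂⟩ := h₂
      refine ⟨I₁ ⊔ I₂, sup_le hle₁ hle₂,
        tmap (Submodule.inclusion (le_sup_left : I₁ ≤ I₁ ⊔ I₂))
            (LinearMap.id : N →ₗ[S] N) x₁ +
          tmap (Submodule.inclusion (le_sup_right : I₂ ≤ I₁ ⊔ I₂))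
            (LinearMap.id : N →ₗ[S] N) x₂, Submodule.FG.sup hfg₁ hfg₂, ?_⟩
      rw [map_add, tmap_tmap, tmap_tmap]
      have e₁ : (Submodule.inclusion (sup_le hle₁ hle₂)).comp
          (Submodule.inclusion (le_sup_left : I₁ ≤ I₁ ⊔ I₂)) = Submodule.inclusion hle₁ :=
        LinearMap.ext fun _ => rfl
      have e₂ : (Submodule.inclusion (sup_le hle₁ hle₂)).comp
          (Submodule.inclusion (le_sup_right : I₂ ≤ I₁ ⊔ I₂)) = Submodule.inclusion hle₂ :=
        LinearMap.ext fun _ => rfl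
      have e₃ : (LinearMap.id : N →ₗ[S] N).comp LinearMap.id = LinearMap.id :=
        LinearMap.ext fun _ => rfl
      rw [e₁, e₂, e₃, hx₁, hx₂, map_add]
  rw [injective_iff_map_eq_zero]
  intro x hx
  obtain ⟨I₀, hle, x₀, hfg₀, rfl⟩ := exists_fg_factor x
  rw [tmap_tmap] at hx
  have e1 : (I.subtype).comp (Submodule.inclusion hle) = I₀.subtype :=
    LinearMap.ext fun _ => rfl
  have e2 : (LinearMap.id : N →ₗ[S] N).comp LinearMap.id = LinearMap.id :=
    LinearMap.ext fun _ => rfl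
  rw [e1, e2] at hx
  rw [(injective_iff_map_eq_zero _).1 (hfg I₀ hfg₀) x₀ hx, map_zero]

/-- Flatness follows from injectivity of tensoring with finitely generated ideals. -/
theorem flatLeft_of_fg_ideals
    (hfg : ∀ I : Ideal Sᵐᵒᵖ, I.FG →
      Function.Injective (tmap (I.subtype) (LinearMap.id : N →ₗ[S] N))) :
    FlatLeft S N :=
  flatLeft_of_injective_char
    (Module.Baer.injective (baer_char (tmap_ideal_injective_of_fg_case hfg)))

end Baer

end NCT
namespace NCT

section Free

variable {S : Type u} [Ring S] {N : Type u} [AddCommGroup N] [Module S N]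

/-- Evaluation `Tens S Sᵐᵒᵖ N → N`. -/
def eps : Tens S Sᵐᵒᵖ N →+ N :=
  liftTens (LinearMap.mk₂ ℤ (fun c n => c.unop • n)
    (fun c c' n => by simp [MulOpposite.unop_add, add_smul])
    (fun z c n => by beta_reduce; rw [MulOpposite.unop_smul, smul_assoc])
    (fun c n n' => by simp)
    (fun z c n => by beta_reduce; rw [smul_comm]))
    (fun r c n => by
      simp only [LinearMap.mk₂_apply, smul_eq_mul, MulOpposite.unop_mul,
        MulOpposite.unop_op, mul_smul])

@[simp] lemma eps_mk_tmul (c : Sᵐᵒᵖ) (n : N) :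
    eps (mk (c ⊗ₜ[ℤ] n)) = c.unop • n := by
  rw [eps]
  exact liftTens_mk_tmul _ _ c n

variable {l : ℕ}

lemma sum_single_eq (v : Fin l →₀ Sᵐᵒᵖ) : (∑ i, Finsupp.single i (v i)) = v := by
  ext j
  rw [Finsupp.finset_sum_apply]
  simp [Finsupp.single_apply]

/-- The standard generators of the balanced tensor product with a finite free module. -/
def delta : (Fin l → N) →+ Tens S (Fin l →₀ Sᵐᵒᵖ) N :=
  AddMonoidHom.mk' (fun φ => ∑ i, mk ((Finsupp.single i (1 : Sᵐᵒᵖ)) ⊗ₜ[ℤ] φ i)) (by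
    intro φ φ'
    rw [← Finset.sum_add_distrib]
    refine Finset.sum_congr rfl fun i _ => ?_
    rw [Pi.add_apply, TensorProduct.tmul_add, map_add])

lemma delta_apply (φ : Fin l → N) :
    delta (S := S) φ = ∑ i, mk ((Finsupp.single i (1 : Sᵐᵒᵖ)) ⊗ₜ[ℤ] φ i) := rfl

lemma mk_tmul_rep (v : Fin l →₀ Sᵐᵒᵖ) (n : N) :
    (mk (v ⊗ₜ[ℤ] n) : Tens S (Fin l →₀ Sᵐᵒᵖ) N)
      = ∑ i, mk ((Finsupp.single i (1 : Sᵐᵒᵖ)) ⊗ₜ[ℤ] ((v i).unop • n)) := by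
  conv_lhs => rw [← sum_single_eq v]
  rw [TensorProduct.sum_tmul, map_sum]
  refine Finset.sum_congr rfl fun i _ => ?_
  have h1 : Finsupp.single i (v i)
      = MulOpposite.op ((v i).unop) • Finsupp.single i (1 : Sᵐᵒᵖ) := by
    rw [MulOpposite.op_unop, Finsupp.smul_single, smul_eq_mul, mul_one]
  rw [h1, mk_smul_tmul]

lemma delta_surjective : Function.Surjective (delta (S := S) (N := N) (l := l)) := by
  intro x
  obtain ⟨t, rfl⟩ := mk_surjective x
  induction t using TensorProduct.induction_on with
  | zero => exact ⟨0, by rw [map_zero, map_zero]⟩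
  | tmul v n => exact ⟨fun i => (v i).unop • n, (mk_tmul_rep v n).symm⟩
  | add a b ha hb =>
    obtain ⟨φa, hφa⟩ := ha
    obtain ⟨φb, hφb⟩ := hb
    exact ⟨φa + φb, by rw [map_add, hφa, hφb, map_add]⟩

end Free

section Core

variable {R : Type u} [Ring R] {S : Type u} [Ring S]
variable {E : Type u} [AddCommGroup E] [Module R E] [Module Sᵐᵒᵖ E] [SMulCommClass R Sᵐᵒᵖ E]
variable {J : Type u} [AddCommGroup J] [Module R J]

theorem tmap_fgideal_injective (hJ : Module.Injective R J)
    (I : Ideal Sᵐᵒᵖ) (hfp : IsFinitelyPresentableMod Sᵐᵒᵖ ↥I)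
    (hext : ∀ g : ↥I →ₗ[Sᵐᵒᵖ] E, ∃ h : Sᵐᵒᵖ →ₗ[Sᵐᵒᵖ] E, ∀ x : ↥I, h ↑x = g x) :
    Function.Injective
      (tmap (I.subtype) (LinearMap.id : (E →ₗ[R] J) →ₗ[S] (E →ₗ[R] J))) := by
  obtain ⟨k, l, d, ⟨eI⟩⟩ := hfp
  let π : (Fin l →₀ Sᵐᵒᵖ) →ₗ[Sᵐᵒᵖ] ↥I :=
    eI.symm.toLinearMap.comp (LinearMap.range d).mkQ
  have hπs : Function.Surjective π :=
    eI.symm.surjective.comp (Submodule.mkQ_surjective _)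
  have hπd : π.comp d = 0 := by
    refine LinearMap.ext fun w => ?_
    have h0 : ((LinearMap.range d).mkQ) (d w) = 0 :=
      (Submodule.Quotient.mk_eq_zero _).mpr ⟨w, rfl⟩
    show eI.symm.toLinearMap (((LinearMap.range d).mkQ) (d w)) = 0
    rw [h0, map_zero]
  rw [injective_iff_map_eq_zero]
  intro x hx
  obtain ⟨y, rfl⟩ := tmap_surj hπs x
  obtain ⟨φ, rfl⟩ := delta_surjective y
  set b : Fin l → Sᵐᵒᵖ := fun i => (π (Finsupp.single i 1) : Sᵐᵒᵖ) with hb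
  set s : Fin l → Fin k → Sᵐᵒᵖ := fun i j => d (Finsupp.single j 1) i with hs
  -- step 1 : the relation ∑ i, (b i)ᵒᵖ • φ i = 0
  have hsum : (∑ i, (b i).unop • φ i) = 0 := by
    have h0 : tmap (I.subtype.comp π)
        ((LinearMap.id : (E →ₗ[R] J) →ₗ[S] (E →ₗ[R] J)).comp LinearMap.id)
        (delta φ) = 0 := by
      rw [← tmap_tmap]; exact hx
    have h1 : tmap (I.subtype.comp π)
        ((LinearMap.id : (E →ₗ[R] J) →ₗ[S] (E →ₗ[R] J)).comp LinearMap.id)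
        (delta φ) = ∑ i, mk ((b i) ⊗ₜ[ℤ] φ i) := by
      rw [delta_apply, map_sum]
      refine Finset.sum_congr rfl fun i _ => ?_
      have := tmap_mk_tmul (R := S) (I.subtype.comp π) (Finsupp.single i (1 : Sᵐᵒᵖ)) (φ i)
      rw [show ((LinearMap.id : (E →ₗ[R] J) →ₗ[S] (E →ₗ[R] J)).comp LinearMap.id)
        = LinearMap.id from LinearMap.ext fun _ => rfl]
      exact this
    have h2 := congrArg eps (h1.symm.trans h0)
    rw [map_sum, map_zero] at h2
    rw [← h2]
    exact Finset.sum_congr rfl fun i _ => (eps_mk_tmul _ _).symm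
  -- step 2 : vanishing against all relation-compatible tuples from E
  have hvanish : ∀ e : Fin l → E,
      (∀ j, (∑ i, s i j • e i) = 0) → (∑ i, (φ i) (e i)) = 0 := by
    intro e he
    set hl : (Fin l →₀ Sᵐᵒᵖ) →ₗ[Sᵐᵒᵖ] E := Finsupp.linearCombination Sᵐᵒᵖ e with hhl
    have hl_single : ∀ (i : Fin l) (c : Sᵐᵒᵖ), hl (Finsupp.single i c) = c • e i :=
      fun i c => by simp [hhl]
    have hl_apply : ∀ v : Fin l →₀ Sᵐᵒᵖ, hl v = ∑ i, v i • e i := fun v => by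
      conv_lhs => rw [← sum_single_eq v]
      rw [map_sum]
      exact Finset.sum_congr rfl fun i _ => hl_single i (v i)
    have hld : hl.comp d = 0 := by
      refine Finsupp.lhom_ext fun j a => ?_
      have h2 : (Finsupp.single j a : Fin k →₀ Sᵐᵒᵖ) = a • Finsupp.single j (1 : Sᵐᵒᵖ) := by
        rw [Finsupp.smul_single, smul_eq_mul, mul_one]
      rw [LinearMap.comp_apply, h2, map_smul, map_smul, hl_apply]
      rw [show (∑ i, (d (Finsupp.single j 1)) i • e i) = 0 from he j, smul_zero,
        LinearMap.zero_apply]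
    have hker : LinearMap.range d ≤ LinearMap.ker hl := by
      rintro w ⟨u, rfl⟩
      exact LinearMap.congr_fun hld u
    set hbar : ↥I →ₗ[Sᵐᵒᵖ] E :=
      ((LinearMap.range d).liftQ hl hker).comp (eI.toLinearMap) with hhbar
    have hbar_pi : ∀ w, hbar (π w) = hl w := fun w => by
      show ((LinearMap.range d).liftQ hl hker)
        (eI (eI.symm (((LinearMap.range d).mkQ) w))) = hl w
      rw [LinearEquiv.apply_symm_apply, Submodule.mkQ_apply, Submodule.liftQ_apply]
    obtain ⟨H, hH⟩ := hext hbar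
    have he_eq : ∀ i, e i = (b i) • H 1 := by
      intro i
      have h3 : e i = hbar (π (Finsupp.single i 1)) := by
        rw [hbar_pi, hl_single, one_smul]
      rw [h3, ← hH]
      show H (b i) = b i • H 1
      rw [show (b i) = b i • (1 : Sᵐᵒᵖ) from (by rw [smul_eq_mul, mul_one]), map_smul]
      rw [smul_eq_mul, mul_one]
    calc ∑ i, φ i (e i) = ∑ i, ((b i).unop • φ i) (H 1) := by
          refine Finset.sum_congr rfl fun i _ => ?_
          rw [he_eq i]
          rfl
      _ = (∑ i, (b i).unop • φ i) (H 1) := (LinearMap.sum_apply _ _ _).symm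
      _ = 0 := by rw [hsum, LinearMap.zero_apply]
  -- step 3 : use injectivity of J to solve for ψ
  let α : (Fin l → E) →ₗ[R] (Fin k → E) :=
    { toFun := fun e j => ∑ i, s i j • e i
      map_add' := by
        intro e e'
        funext j
        simp [smul_add, Finset.sum_add_distrib]
      map_smul' := by
        intro r e
        funext j
        simp only [RingHom.id_apply, Pi.smul_apply, Finset.smul_sum]
        exact Finset.sum_congr rfl fun i _ => (smul_comm r (s i j) (e i)).symm }
  let β : (Fin l → E) →ₗ[R] J :=
    { toFun := fun e => ∑ i, φ i (e i)
      map_add' := by intro e e'; simp [Finset.sum_add_distrib]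
      map_smul' := by intro r e; simp [Finset.smul_sum] }
  have hαβ : LinearMap.ker α ≤ LinearMap.ker β := by
    intro e he
    rw [LinearMap.mem_ker] at he ⊢
    exact hvanish e fun j => congrFun he j
  have habar : Function.Injective ((LinearMap.ker α).liftQ α (le_refl _)) := by
    rw [← LinearMap.ker_eq_bot]
    exact Submodule.ker_liftQ_eq_bot _ _ _ (le_refl _)
  obtain ⟨γ, hγ⟩ := hJ.out ((LinearMap.ker α).liftQ α (le_refl _)) habar
    ((LinearMap.ker α).liftQ β hαβ)
  have hfact : ∀ e, γ (α e) = β e := fun e => by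
    have h4 := hγ (Submodule.Quotient.mk e)
    rwa [Submodule.liftQ_apply, Submodule.liftQ_apply] at h4
  classical
  let ψ : Fin k → (E →ₗ[R] J) := fun j => γ.comp (LinearMap.single R (fun _ => E) j)
  have hφψ : ∀ i, φ i = ∑ j, (s i j).unop • ψ j := by
    intro i
    refine LinearMap.ext fun e0 => ?_
    have h5 : (fun j => s i j • e0) = α (Pi.single i e0) := by
      funext j
      show s i j • e0 = ∑ i', s i' j • (Pi.single i e0 i')
      rw [Finset.sum_eq_single i]
      · rw [Pi.single_eq_same]
      · intro i' _ hne
        rw [Pi.single_eq_of_ne hne, smul_zero]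
      · intro h
        exact absurd (Finset.mem_univ i) h
    calc φ i e0 = β (Pi.single i e0) := by
          show (φ i) e0 = ∑ i', φ i' (Pi.single (M := fun _ => E) i e0 i')
          rw [Finset.sum_eq_single i]
          · rw [Pi.single_eq_same]
          · intro i' _ hne
            rw [Pi.single_eq_of_ne hne, map_zero]
          · intro h
            exact absurd (Finset.mem_univ i) h
      _ = γ (α (Pi.single i e0)) := (hfact _).symm
      _ = γ (fun j => s i j • e0) := by rw [← h5]
      _ = γ (∑ j, Pi.single j (s i j • e0)) := by rw [Finset.univ_sum_single]
      _ = ∑ j, γ (Pi.single j (s i j • e0)) := map_sum γ _ _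
      _ = ∑ j, ((s i j).unop • ψ j) e0 := Finset.sum_congr rfl fun j _ => rfl
      _ = (∑ j, (s i j).unop • ψ j) e0 := (LinearMap.sum_apply _ _ _).symm
  -- step 4 : conclude
  have hdelta : delta φ = tmap d
      (LinearMap.id : (E →ₗ[R] J) →ₗ[S] (E →ₗ[R] J)) (delta ψ) := by
    rw [delta_apply (S := S) ψ, map_sum]
    calc delta φ = ∑ i, mk ((Finsupp.single i (1 : Sᵐᵒᵖ)) ⊗ₜ[ℤ] φ i) := delta_apply φ
      _ = ∑ i, mk ((Finsupp.single i (1 : Sᵐᵒᵖ)) ⊗ₜ[ℤ] (∑ j, (s i j).unop • ψ j)) := by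
          refine Finset.sum_congr rfl fun i _ => ?_
          rw [hφψ i]
      _ = ∑ i, ∑ j, mk ((Finsupp.single i (1 : Sᵐᵒᵖ)) ⊗ₜ[ℤ] ((s i j).unop • ψ j)) := by
          refine Finset.sum_congr rfl fun i _ => ?_
          rw [TensorProduct.tmul_sum, map_sum]
      _ = ∑ j, ∑ i, mk ((Finsupp.single i (1 : Sᵐᵒᵖ)) ⊗ₜ[ℤ] ((s i j).unop • ψ j)) :=
          Finset.sum_comm
      _ = ∑ j, tmap d (LinearMap.id : (E →ₗ[R] J) →ₗ[S] (E →ₗ[R] J))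
            (mk ((Finsupp.single j (1 : Sᵐᵒᵖ)) ⊗ₜ[ℤ] ψ j)) := by
          refine Finset.sum_congr rfl fun j _ => ?_
          rw [tmap_mk_tmul, mk_tmul_rep]
  rw [hdelta, tmap_tmap, show π.comp d = 0 from hπd]
  rw [show ((LinearMap.id : (E →ₗ[R] J) →ₗ[S] (E →ₗ[R] J)).comp LinearMap.id)
    = LinearMap.id from LinearMap.ext fun _ => rfl]
  rw [tmap_zero_left]
  rfl

end Core

end NCT
section ExtLift

open CategoryTheory

variable {S : Type u} [Ring S]
variable {E : Type u} [AddCommGroup E] [Module Sᵐᵒᵖ E]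

theorem ext_lifting (I : Ideal Sᵐᵒᵖ)
    (hT : Subsingleton (((Ext ℤ (ModuleCat.{u} Sᵐᵒᵖ) 1).obj
      (op (ModuleCat.of Sᵐᵒᵖ (Sᵐᵒᵖ ⧸ I)))).obj (ModuleCat.of Sᵐᵒᵖ E))) :
    ∀ g : ↥I →ₗ[Sᵐᵒᵖ] E, ∃ h : Sᵐᵒᵖ →ₗ[Sᵐᵒᵖ] E, ∀ x : ↥I, h ↑x = g x := by
  intro γ
  set T := ModuleCat.of Sᵐᵒᵖ (Sᵐᵒᵖ ⧸ I) with hTdef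
  set E' := ModuleCat.of Sᵐᵒᵖ E with hE'def
  let P : ProjectiveResolution T := ProjectiveResolution.of T
  -- Hom-complex is exact at 1
  haveI hsub : Subsingleton ((P.complex.linearYonedaObj ℤ E').homology 1) :=
    Equiv.subsingleton (((forget (ModuleCat ℤ)).mapIso (P.isoExt 1 E')).symm.toEquiv)
  have hexact := (HomologicalComplex.exactAt_iff_isZero_homology
    (P.complex.linearYonedaObj ℤ E') 1).2 (ModuleCat.isZero_of_subsingleton _)
  rw [HomologicalComplex.exactAt_iff' _ 0 1 2 (by simp) (by simp),
    ShortComplex.moduleCat_exact_iff] at hexact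
  -- basic morphisms
  let π₀ : P.complex.X 0 ⟶ T := P.π.f 0
  have hπ₀ : Function.Surjective π₀.hom := (ModuleCat.epi_iff_surjective (P.π.f 0)).1 inferInstance
  haveI : Epi π₀ := (inferInstance : Epi (P.π.f 0))
  have hexact₀ := P.exact₀
  rw [ShortComplex.moduleCat_exact_iff] at hexact₀
  haveI : Projective (ModuleCat.of Sᵐᵒᵖ Sᵐᵒᵖ) :=
    (IsProjective.iff_projective (R := Sᵐᵒᵖ) Sᵐᵒᵖ).1 inferInstance
  haveI : Epi (ModuleCat.ofHom I.mkQ : ModuleCat.of Sᵐᵒᵖ Sᵐᵒᵖ ⟶ T) :=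
    (ModuleCat.epi_iff_surjective _).2 (Submodule.mkQ_surjective I)
  let u : P.complex.X 0 ⟶ ModuleCat.of Sᵐᵒᵖ Sᵐᵒᵖ :=
    Projective.factorThru π₀ (ModuleCat.ofHom I.mkQ)
  let ulin : ↑(P.complex.X 0) →ₗ[Sᵐᵒᵖ] Sᵐᵒᵖ := u.hom
  have hu : ∀ p, I.mkQ (ulin p) = π₀.hom p := fun p =>
    congrArg (fun f => f.hom p) (Projective.factorThru_comp π₀ (ModuleCat.ofHom I.mkQ))
  let v : ModuleCat.of Sᵐᵒᵖ Sᵐᵒᵖ ⟶ P.complex.X 0 :=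
    Projective.factorThru (ModuleCat.ofHom I.mkQ) π₀
  let vlin : Sᵐᵒᵖ →ₗ[Sᵐᵒᵖ] ↑(P.complex.X 0) := v.hom
  have hv : ∀ a : Sᵐᵒᵖ, π₀.hom (vlin a) = I.mkQ a := fun a =>
    congrArg (fun f => f.hom a) (Projective.factorThru_comp (ModuleCat.ofHom I.mkQ) π₀)
  have hmem : ∀ p, π₀.hom p = 0 → ulin p ∈ I := fun p hp => by
    have h1 := hu p
    rw [hp] at h1
    exact (Submodule.Quotient.mk_eq_zero I).1 h1
  let d10 : P.complex.X 1 ⟶ P.complex.X 0 := P.complex.d 1 0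
  let dlin : ↑(P.complex.X 1) →ₗ[Sᵐᵒᵖ] ↑(P.complex.X 0) := d10.hom
  have hd10π : ∀ w, π₀.hom (dlin w) = 0 := fun w =>
    congrArg (fun f => f.hom w) P.complex_d_comp_π_f_zero
  -- the cocycle associated with γ
  let g1 : P.complex.X 1 ⟶ E' :=
    ModuleCat.ofHom (γ.comp (LinearMap.codRestrict I (ulin.comp dlin)
      (fun w => hmem _ (hd10π w))))
  have hg1 : (P.complex.linearYonedaObj ℤ E').d 1 2 g1 = 0 := by
    have h2 : (P.complex.linearYonedaObj ℤ E').d 1 2 g1 = P.complex.d 2 1 ≫ g1 := rfl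
    rw [h2]
    refine ModuleCat.hom_ext (LinearMap.ext fun w => ?_)
    show γ (LinearMap.codRestrict I (ulin.comp dlin) _ ((P.complex.d 2 1).hom w)) = 0
    have h3 : (LinearMap.codRestrict I (ulin.comp dlin)
        (fun w => hmem _ (hd10π w))) ((P.complex.d 2 1).hom w) = 0 := by
      apply Subtype.ext
      show ulin (dlin ((P.complex.d 2 1).hom w)) = 0
      have h4 : dlin ((P.complex.d 2 1).hom w) = 0 :=
        congrArg (fun f => f.hom w) (P.complex.d_comp_d 2 1 0)
      rw [h4, map_zero]
    rw [h3, map_zero]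
  obtain ⟨h', hh'⟩ := hexact g1 hg1
  let h'' : P.complex.X 0 ⟶ E' := h'
  let hlin : ↑(P.complex.X 0) →ₗ[Sᵐᵒᵖ] E := h''.hom
  have hh2 : ∀ w, hlin (dlin w) = γ ⟨ulin (dlin w), hmem _ (hd10π w)⟩ := fun w =>
    congrArg (fun f => f.hom w) (show d10 ≫ h'' = g1 from hh')
  have hK : ∀ (p : ↑(P.complex.X 0)) (hp : π₀.hom p = 0), hlin p = γ ⟨ulin p, hmem p hp⟩ := by
    intro p hp
    obtain ⟨w, rfl⟩ := hexact₀ p hp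
    exact hh2 w
  -- assemble the extension
  have hw2 : ∀ a : Sᵐᵒᵖ, a - ulin (vlin a) ∈ I := fun a => by
    rw [← Submodule.Quotient.mk_eq_zero I, ← Submodule.mkQ_apply, map_sub, hu, hv,
      Submodule.mkQ_apply, sub_self]
  refine ⟨γ.comp (LinearMap.codRestrict I (LinearMap.id (R := Sᵐᵒᵖ) (M := Sᵐᵒᵖ) - ulin.comp vlin) hw2)
    + hlin.comp vlin, ?_⟩
  intro x
  have hvx : π₀.hom (vlin ↑x) = 0 := by
    rw [hv, Submodule.mkQ_apply, Submodule.Quotient.mk_eq_zero]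
    exact x.2
  have h6 : hlin (vlin ↑x) = γ ⟨ulin (vlin ↑x), hmem _ hvx⟩ := hK _ hvx
  show γ (LinearMap.codRestrict I (LinearMap.id (R := Sᵐᵒᵖ) (M := Sᵐᵒᵖ) - ulin.comp vlin) hw2 ↑x)
      + hlin (vlin ↑x) = γ x
  rw [h6, ← map_add]
  congr 1
  apply Subtype.ext
  show ((↑x : Sᵐᵒᵖ) - ulin (vlin ↑x)) + ulin (vlin ↑x) = ↑x
  rw [sub_add_cancel]

end ExtLift
section Glue

lemma isFP_of_equiv {A M M' : Type u} [Ring A] [AddCommGroup M] [Module A M]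
    [AddCommGroup M'] [Module A M'] (e : M ≃ₗ[A] M')
    (h : IsFinitelyPresentableMod A M) : IsFinitelyPresentableMod A M' := by
  obtain ⟨k, l, f, ⟨g⟩⟩ := h
  exact ⟨k, l, f, ⟨e.symm.trans g⟩⟩

/-- `S` with its right action is isomorphic to the regular left `Sᵐᵒᵖ`-module. -/
def opEquiv (S : Type u) [Ring S] : S ≃ₗ[Sᵐᵒᵖ] Sᵐᵒᵖ :=
  { MulOpposite.opAddEquiv with
    map_smul' := fun c s => by
      show MulOpposite.op (c • s) = c • MulOpposite.op s
      rw [MulOpposite.smul_eq_mul_unop, MulOpposite.op_mul, MulOpposite.op_unop, smul_eq_mul] }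

variable {S : Type u} [Ring S]

lemma fp_ideal_transfer
    (hcoh : ∀ I : Submodule Sᵐᵒᵖ S, I.FG → IsFinitelyPresentableMod Sᵐᵒᵖ I)
    (I : Ideal Sᵐᵒᵖ) (hI : I.FG) : IsFinitelyPresentableMod Sᵐᵒᵖ ↥I := by
  let e := opEquiv S
  let I' : Submodule Sᵐᵒᵖ S := Submodule.comap (e : S →ₗ[Sᵐᵒᵖ] Sᵐᵒᵖ) I
  have hmap : Submodule.map (e : S →ₗ[Sᵐᵒᵖ] Sᵐᵒᵖ) I' = I :=
    Submodule.map_comap_eq_of_surjective e.surjective I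
  have hI' : I'.FG := by
    have h1 : I' = Submodule.map (e.symm : Sᵐᵒᵖ →ₗ[Sᵐᵒᵖ] S) I := by
      show Submodule.comap (e : S →ₗ[Sᵐᵒᵖ] Sᵐᵒᵖ) I = Submodule.map (e.symm : Sᵐᵒᵖ →ₗ[Sᵐᵒᵖ] S) I
      rw [Submodule.comap_equiv_eq_map_symm]
    rw [h1]
    exact Submodule.FG.map _ hI
  have hfp' := hcoh I' hI'
  refine isFP_of_equiv ?_ hfp'
  exact (e.submoduleMap I').trans (LinearEquiv.ofEq _ _ hmap)

lemma fp_quotient (I : Ideal Sᵐᵒᵖ) (hI : I.FG) :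
    IsFinitelyPresentableMod Sᵐᵒᵖ (Sᵐᵒᵖ ⧸ I) := by
  obtain ⟨k, b, hb⟩ := Submodule.fg_iff_exists_fin_generating_family.1 hI
  let u := Finsupp.LinearEquiv.finsuppUnique Sᵐᵒᵖ Sᵐᵒᵖ (Fin 1)
  let d : (Fin k →₀ Sᵐᵒᵖ) →ₗ[Sᵐᵒᵖ] (Fin 1 →₀ Sᵐᵒᵖ) :=
    u.symm.toLinearMap.comp (Finsupp.linearCombination Sᵐᵒᵖ b)
  have hud : u.toLinearMap.comp d = Finsupp.linearCombination Sᵐᵒᵖ b :=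
    LinearMap.ext fun w => u.apply_symm_apply _
  have hmap : (LinearMap.range d).map u.toLinearMap = I := by
    rw [← LinearMap.range_comp, hud, Finsupp.range_linearCombination, hb]
  exact ⟨k, 1, d, ⟨(Submodule.Quotient.equiv (LinearMap.range d) I u hmap).symm⟩⟩

end Glue

/-- **Hom from an fp-injective bimodule into an injective module is flat.**
Let `R` be a ring, `S` a right coherent ring (every finitely generated right ideal of `S`
is finitely presentable), `E` an `R`-`S`-bimodule which is fp-injective as a right
`S`-module (i.e. `Ext¹_S(T, E) = 0` for every finitely presentable right `S`-module `T`),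
and `J` an injective left `R`-module.  Then the left `S`-module `Hom_R(E, J)` is flat. -/
theorem hom_flat_of_fp_injective_of_injective
    (R : Type u) [Ring R] (S : Type u) [Ring S]
    (hcoh : ∀ I : Submodule Sᵐᵒᵖ S, I.FG → IsFinitelyPresentableMod Sᵐᵒᵖ I)
    (E : Type u) [AddCommGroup E] [Module R E] [Module Sᵐᵒᵖ E] [SMulCommClass R Sᵐᵒᵖ E]
    (hfpinj : ∀ T : ModuleCat.{u} Sᵐᵒᵖ, IsFinitelyPresentableMod Sᵐᵒᵖ T →
      Subsingleton (((Ext ℤ (ModuleCat.{u} Sᵐᵒᵖ) 1).obj (op T)).obj (ModuleCat.of Sᵐᵒᵖ E)))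
    (J : Type u) [AddCommGroup J] [Module R J] (hJ : Module.Injective R J) :
    NCT.FlatLeft S (E →ₗ[R] J) := by
  apply NCT.flatLeft_of_fg_ideals
  intro I hIfg
  exact NCT.tmap_fgideal_injective hJ I (fp_ideal_transfer hcoh I hIfg)
    (ext_lifting I (hfpinj (ModuleCat.of Sᵐᵒᵖ (Sᵐᵒᵖ ⧸ I)) (fp_quotient I hIfg)))
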